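/- Let K be a field, n, t ≥ 1, and P ∈ K^{nt×t}. Then for all blockwise commuting B, G ∈ K^{nt×t} one has [B, F_P B, …, F_P^{n-1} B] G = [G, F_P G, …, F_P^{n-1} G] B. -/

import Mathlib

open Matrix

/-- The second block companion matrix `F_P` associated with the stacked blocks
`P = [P_0; …; P_{n-1}] ∈ K^{nt×t}`: the `(i,j)` block (of size `t×t`) is `I_t` if
`i = j+1`, `P_i` if `j = n-1`, and `0` otherwise. -/
def bcompanion {K : Type*} [Field K] {n t : ℕ}
    (P : Matrix (Fin (n + 1) × Fin t) (Fin t) K) :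
    Matrix (Fin (n + 1) × Fin t) (Fin (n + 1) × Fin t) K :=
  Matrix.of fun r s =>
    if s.1 = Fin.last n then P r s.2
    else if (r.1 : ℕ) = (s.1 : ℕ) + 1 ∧ r.2 = s.2 then 1 else 0

/-- The `n`-step reachability matrix `R(A, G) = [G, AG, …, A^{n-1} G] ∈ K^{nt×nm}`. -/
def bkrylov {K : Type*} [Field K] {n t m : ℕ}
    (A : Matrix (Fin (n + 1) × Fin t) (Fin (n + 1) × Fin t) K)
    (G : Matrix (Fin (n + 1) × Fin t) (Fin m) K) :
    Matrix (Fin (n + 1) × Fin t) (Fin (n + 1) × Fin m) K :=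
  Matrix.of fun r s => (A ^ (s.1 : ℕ) * G) r s.2

/-- `E_i = e_i ⊗ I_t ∈ K^{nt×t}`. -/
def Eblk {K : Type*} [Field K] {n t : ℕ} (i : Fin (n + 1)) :
    Matrix (Fin (n + 1) × Fin t) (Fin t) K :=
  Matrix.of fun r c => if r.1 = i ∧ r.2 = c then 1 else 0

/-- `I_n ⊗ G_i ∈ K^{nt×nm}`, where `G_i` is the `i`-th block of
`G = [G_0; …; G_{n-1}] ∈ K^{nt×m}`. -/
def blockDiag {K : Type*} [Field K] {n t m : ℕ}
    (G : Matrix (Fin (n + 1) × Fin t) (Fin m) K) (i : Fin (n + 1)) :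
    Matrix (Fin (n + 1) × Fin t) (Fin (n + 1) × Fin m) K :=
  Matrix.of fun r s => if r.1 = s.1 then G (i, r.2) s.2 else 0

/-- The operator substitution `G(A) = Σ_{i=0}^{n-1} A^i (I_n ⊗ G_i) ∈ K^{nt×nm}`. -/
def bpolyEval {K : Type*} [Field K] {n t m : ℕ}
    (G : Matrix (Fin (n + 1) × Fin t) (Fin m) K)
    (A : Matrix (Fin (n + 1) × Fin t) (Fin (n + 1) × Fin t) K) :
    Matrix (Fin (n + 1) × Fin t) (Fin (n + 1) × Fin m) K :=
  ∑ i : Fin (n + 1), A ^ (i : ℕ) * blockDiag G i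

/-- The `i`-th block `B_i ∈ K^{t×t}` of a stacked matrix `B = [B_0; …; B_{n-1}]`. -/
def blk {K : Type*} [Field K] {n t : ℕ} (B : Matrix (Fin (n + 1) × Fin t) (Fin t) K)
    (i : Fin (n + 1)) : Matrix (Fin t) (Fin t) K :=
  Matrix.of fun a b => B (i, a) b

/-- `B` and `G` are blockwise commuting: `B_i G_j = G_j B_i` for all `i, j`. -/
def BlockwiseComm {K : Type*} [Field K] {n t : ℕ}
    (B G : Matrix (Fin (n + 1) × Fin t) (Fin t) K) : Prop :=
  ∀ i j : Fin (n + 1), blk B i * blk G j = blk G j * blk B i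

section Aux

variable {K : Type*} [Field K] {n t : ℕ}

lemma krylov_mul (A : Matrix (Fin (n + 1) × Fin t) (Fin (n + 1) × Fin t) K)
    (B G : Matrix (Fin (n + 1) × Fin t) (Fin t) K) :
    bkrylov A B * G = ∑ j : Fin (n + 1), A ^ (j : ℕ) * B * blk G j := by
  ext ⟨r1, r2⟩ c
  simp only [Matrix.mul_apply, bkrylov, blk, Matrix.sum_apply, Matrix.of_apply,
    Fintype.sum_prod_type]

lemma stack_eq (B : Matrix (Fin (n + 1) × Fin t) (Fin t) K) :
    (∑ i : Fin (n + 1), (Eblk i : Matrix (Fin (n + 1) × Fin t) (Fin t) K) * blk B i) = B := by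
  ext ⟨r1, r2⟩ c
  simp [Eblk, blk, Matrix.sum_apply, Matrix.mul_apply, ite_and,
    Finset.sum_ite_eq, Finset.sum_ite_eq']

lemma comp_E_step (P : Matrix (Fin (n + 1) × Fin t) (Fin t) K) {i j : Fin (n + 1)}
    (hij : (j : ℕ) = (i : ℕ) + 1) :
    bcompanion P * (Eblk i : Matrix (Fin (n + 1) × Fin t) (Fin t) K) = Eblk j := by
  have hiv : (i : ℕ) < n := by have := j.isLt; omega
  have hi : i ≠ Fin.last n := Fin.ne_of_val_ne (by simpa [Fin.last] using hiv.ne)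
  ext ⟨r1, r2⟩ c
  simp only [Matrix.mul_apply, Eblk, Matrix.of_apply, Fintype.sum_prod_type, ite_and,
    mul_ite, mul_one, mul_zero, Finset.sum_ite_eq', Finset.mem_univ, if_true]
  rw [Finset.sum_comm]
  simp only [Finset.sum_ite_eq', Finset.mem_univ, if_true]
  simp only [bcompanion, Matrix.of_apply]
  rw [if_neg hi]
  have h1 : r1 = j ↔ (r1 : ℕ) = (i : ℕ) + 1 := by rw [Fin.ext_iff, hij]
  simp [ite_and, h1]

lemma pow_E_zero (P : Matrix (Fin (n + 1) × Fin t) (Fin t) K) (i : Fin (n + 1)) :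
    (bcompanion P) ^ (i : ℕ) * (Eblk 0 : Matrix (Fin (n + 1) × Fin t) (Fin t) K) = Eblk i := by
  induction i using Fin.induction with
  | zero => simp
  | succ i ih =>
    rw [Fin.val_succ, pow_succ', Matrix.mul_assoc]
    rw [show ((i : ℕ) : ℕ) = ((i.castSucc : Fin (n + 1)) : ℕ) from rfl, ih]
    exact comp_E_step P (by simp)

end Aux

/-- For all blockwise commuting `B, G ∈ K^{nt×t}`,
`[B, F_P B, …, F_P^{n-1} B] G = [G, F_P G, …, F_P^{n-1} G] B`. -/
theorem bcompanion_blockwise_symm {K : Type*} [Field K] {n t : ℕ} (ht : 0 < t)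
    (P B G : Matrix (Fin (n + 1) × Fin t) (Fin t) K) (hBG : BlockwiseComm B G) :
    bkrylov (bcompanion P) B * G = bkrylov (bcompanion P) G * B := by
  have key : ∀ (X Y : Matrix (Fin (n + 1) × Fin t) (Fin t) K),
      bkrylov (bcompanion P) X * Y =
        ∑ j : Fin (n + 1), ∑ i : Fin (n + 1),
          (bcompanion P) ^ ((i : ℕ) + (j : ℕ)) * (Eblk 0 : Matrix (Fin (n + 1) × Fin t) (Fin t) K) * (blk X i * blk Y j) := by
    intro X Y
    rw [krylov_mul]
    refine Finset.sum_congr rfl fun j _ => ?_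
    conv_lhs => rw [← stack_eq X]
    rw [Matrix.mul_sum, Matrix.sum_mul]
    refine Finset.sum_congr rfl fun i _ => ?_
    rw [← pow_E_zero P i]
    have h2 : bcompanion P ^ ((i : ℕ) + (j : ℕ)) =
        bcompanion P ^ (j : ℕ) * bcompanion P ^ (i : ℕ) := by
      rw [← pow_add, Nat.add_comm (j : ℕ) (i : ℕ)]
    rw [h2]
    simp [Matrix.mul_assoc]
  rw [key, key, Finset.sum_comm]
  refine Finset.sum_congr rfl fun j _ => Finset.sum_congr rfl fun i _ => ?_
  rw [hBG j i, show (j:ℕ)+(i:ℕ) = (i:ℕ)+(j:ℕ) from Nat.add_comm _ _]
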